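/- Fix n ≥ 1, let (α i)_{i : Fin (n*n)} be an orthonormal basis of Mₙ(ℂ) for the Hilbert–Schmidt inner product, and let δ : Mₙ(ℂ) → M_{n·n}(ℂ) be the unique linear map with δ(α i) = (α i) ⊗ₖ (α i), with Hilbert–Schmidt adjoint δ†. If δ is completely positive, then δ†(1) is an invertible matrix, and hence positive definite. -/

import Mathlib

open Matrix Kronecker ComplexOrder

noncomputable section

/-- The Hilbert-Schmidt inner product `⟨a, b⟩ = Tr(aᴴ b)` on square matrices. -/
def hsInner {m : Type*} [Fintype m] (a b : Matrix m m ℂ) : ℂ :=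
  (aᴴ * b).trace

/-- The amplification `id ⊗ Φ` of a linear map `Φ` between matrix algebras,
acting blockwise on matrices indexed by `Fin k × p`. -/
def amplify {p q : Type*} [Fintype p] [Fintype q]
    (Φ : Matrix p p ℂ →ₗ[ℂ] Matrix q q ℂ) (k : ℕ)
    (M : Matrix (Fin k × p) (Fin k × p) ℂ) :
    Matrix (Fin k × q) (Fin k × q) ℂ :=
  Matrix.of fun i j => Φ (Matrix.of fun a b => M (i.1, a) (j.1, b)) i.2 j.2

/-- A linear map between matrix algebras is completely positive if all its
amplifications send positive semidefinite matrices to positive semidefinite matrices. -/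
def IsCompletelyPositive {p q : Type*} [Fintype p] [Fintype q]
    (Φ : Matrix p p ℂ →ₗ[ℂ] Matrix q q ℂ) : Prop :=
  ∀ (k : ℕ) (M : Matrix (Fin k × p) (Fin k × p) ℂ),
    M.PosSemidef → (amplify Φ k M).PosSemidef

namespace Stmt9Aux

open Complex

lemma hsInner_eq_sum {m : Type*} [Fintype m] (a b : Matrix m m ℂ) :
    hsInner a b = ∑ x : m, ∑ y : m, (starRingEnd ℂ) (a x y) * b x y := by
  rw [hsInner, Matrix.trace]
  simp only [Matrix.diag_apply, Matrix.mul_apply, Matrix.conjTranspose_apply]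
  rw [Finset.sum_comm]
  refine Finset.sum_congr rfl fun x _ => Finset.sum_congr rfl fun y _ => rfl

lemma hsInner_smul_left {m : Type*} [Fintype m] (c : ℂ) (a b : Matrix m m ℂ) :
    hsInner (c • a) b = (starRingEnd ℂ) c * hsInner a b := by
  simp [hsInner_eq_sum, Finset.mul_sum, mul_assoc]

lemma hsInner_add_left {m : Type*} [Fintype m] (a b c : Matrix m m ℂ) :
    hsInner (a + b) c = hsInner a c + hsInner b c := by
  simp [hsInner_eq_sum, add_mul, Finset.sum_add_distrib]

lemma hsInner_zero_left {m : Type*} [Fintype m] (c : Matrix m m ℂ) :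
    hsInner 0 c = 0 := by
  simp [hsInner_eq_sum]

lemma hsInner_sub_right {m : Type*} [Fintype m] (a b c : Matrix m m ℂ) :
    hsInner a (b - c) = hsInner a b - hsInner a c := by
  simp [hsInner_eq_sum, mul_sub, Finset.sum_sub_distrib]

lemma hsInner_self_eq_zero {m : Type*} [Fintype m] {D : Matrix m m ℂ}
    (h : hsInner D D = 0) : D = 0 := by
  have h2 : ∑ x : m, ∑ y : m, Complex.normSq (D x y) = 0 := by
    have h1 : ((∑ x : m, ∑ y : m, (Complex.normSq (D x y) : ℂ))) = 0 := by
      rw [← h, hsInner_eq_sum]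
      exact Finset.sum_congr rfl fun x _ => Finset.sum_congr rfl fun y _ =>
        Complex.normSq_eq_conj_mul_self
    exact_mod_cast h1
  ext x y
  have hx : ∑ y : m, Complex.normSq (D x y) = 0 := by
    have := (Finset.sum_eq_zero_iff_of_nonneg
      (fun i _ => Finset.sum_nonneg fun j _ => Complex.normSq_nonneg _)).mp h2 x
      (Finset.mem_univ _)
    exact this
  have := (Finset.sum_eq_zero_iff_of_nonneg
    (fun j _ => Complex.normSq_nonneg _)).mp hx y (Finset.mem_univ _)
  simpa using Complex.normSq_eq_zero.mp this

lemma quad_eq_hsInner {m : Type*} [Fintype m] (v : m → ℂ) (N : Matrix m m ℂ) :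
    star v ⬝ᵥ N *ᵥ v = hsInner (Matrix.vecMulVec v (star v)) N := by
  simp only [hsInner_eq_sum, Matrix.vecMulVec_apply, dotProduct, Matrix.mulVec,
    Pi.star_apply, RCLike.star_def, _root_.map_mul, Complex.conj_conj, Finset.mul_sum]
  refine Finset.sum_congr rfl fun x _ => Finset.sum_congr rfl fun y _ => by
    ring

lemma psd_vecMulVec {m : Type*} [Fintype m] (v : m → ℂ) :
    (Matrix.vecMulVec v (star v)).PosSemidef := by
  refine Matrix.PosSemidef.of_dotProduct_mulVec_nonneg ?_ ?_
  · ext x y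
    simp [Matrix.conjTranspose_apply, Matrix.vecMulVec_apply, mul_comm]
  · intro w
    have h : star w ⬝ᵥ (Matrix.vecMulVec v (star v)) *ᵥ w
        = star (star v ⬝ᵥ w) * (star v ⬝ᵥ w) := by
      simp only [dotProduct, Matrix.mulVec, Matrix.vecMulVec_apply, Pi.star_apply,
        RCLike.star_def, map_sum, _root_.map_mul, Complex.conj_conj, Finset.mul_sum,
        Finset.sum_mul]
      rw [Finset.sum_comm]
      refine Finset.sum_congr rfl fun x _ => Finset.sum_congr rfl fun y _ => by
        ring
    rw [h]
    exact star_mul_self_nonneg _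

lemma psd_trace_nonneg {m : Type*} [Fintype m] [DecidableEq m] {M : Matrix m m ℂ}
    (hM : M.PosSemidef) : 0 ≤ M.trace := by
  rw [Matrix.trace]
  refine Finset.sum_nonneg fun i _ => ?_
  have := hM.dotProduct_mulVec_nonneg (Pi.single i 1)
  simpa [dotProduct, Pi.single_apply] using this

lemma hsInner_nonneg {m : Type*} [Fintype m] [DecidableEq m] {P Q : Matrix m m ℂ}
    (hP : P.PosSemidef) (hQ : Q.PosSemidef) : 0 ≤ hsInner P Q := by
  obtain ⟨B, rfl⟩ : ∃ B : Matrix m m ℂ, P = Bᴴ * B := by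
    open scoped MatrixOrder in exact CStarAlgebra.nonneg_iff_eq_star_mul_self.mp hP.nonneg
  have h1 : hsInner (Bᴴ * B) Q = (B * Q * Bᴴ).trace := by
    rw [hsInner, Matrix.conjTranspose_mul, Matrix.conjTranspose_conjTranspose,
      Matrix.mul_assoc, Matrix.trace_mul_comm]
  rw [h1]
  exact psd_trace_nonneg (hQ.mul_mul_conjTranspose_same B)

lemma aux_lin (r g : ℂ) (h : ∀ t : ℝ, 0 ≤ (t : ℂ) * r + g) : r = 0 := by
  have him : ∀ t : ℝ, t * r.im + g.im = 0 := fun t => by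
    have := (Complex.le_def.mp (h t)).2
    simpa [Complex.add_im, Complex.mul_im] using this.symm
  have hrim : r.im = 0 := by
    have h0 := him 0; have h1 := him 1
    simp at h0; linarith
  have hre : ∀ t : ℝ, 0 ≤ t * r.re + g.re := fun t => by
    have := (Complex.le_def.mp (h t)).1
    simpa [Complex.add_re, Complex.mul_re] using this
  have hrre : r.re = 0 := by
    by_contra hne
    have := hre ((-(g.re) - 1) / r.re)
    rw [div_mul_cancel₀ _ hne] at this
    linarith
  exact Complex.ext hrre hrim

lemma quadform_single {m : Type*} [Fintype m] [DecidableEq m] (M : Matrix m m ℂ)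
    (s t : m) (c d : ℂ) :
    star (Pi.single s c) ⬝ᵥ M *ᵥ (Pi.single t d) = (starRingEnd ℂ) c * (M s t * d) := by
  rw [← Pi.single_star, Matrix.mulVec_single, single_dotProduct]
  simp [RCLike.star_def]

lemma isHermitian_of_quad {m : Type*} [Fintype m] [DecidableEq m] (M : Matrix m m ℂ)
    (h : ∀ v : m → ℂ, (starRingEnd ℂ) (star v ⬝ᵥ M *ᵥ v) = star v ⬝ᵥ M *ᵥ v) :
    M.IsHermitian := by
  have key : ∀ (s t : m) (c d : ℂ),
      star (Pi.single s c + Pi.single t d) ⬝ᵥ M *ᵥ (Pi.single s c + Pi.single t d)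
      = (starRingEnd ℂ) c * (M s s * c) + (starRingEnd ℂ) c * (M s t * d)
        + (starRingEnd ℂ) d * (M t s * c) + (starRingEnd ℂ) d * (M t t * d) := by
    intro s t c d
    rw [star_add, Matrix.mulVec_add, dotProduct_add, add_dotProduct,
      add_dotProduct, quadform_single, quadform_single, quadform_single,
      quadform_single]
    ring
  have diag : ∀ s, (starRingEnd ℂ) (M s s) = M s s := by
    intro s
    have := h (Pi.single s 1)
    rw [quadform_single] at this
    simpa [_root_.map_mul, _root_.map_one, Complex.conj_conj] using this
  refine Matrix.IsHermitian.ext fun t s => ?_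
  show (starRingEnd ℂ) (M s t) = M t s
  by_cases hst : s = t
  · subst hst; exact diag s
  · have h1 := h (Pi.single s 1 + Pi.single t 1)
    rw [key] at h1
    have h2 := h (Pi.single s 1 + Pi.single t Complex.I)
    rw [key] at h2
    simp only [_root_.map_add, _root_.map_mul, _root_.map_one, _root_.map_neg,
      Complex.conj_I, Complex.conj_conj, one_mul, mul_one, neg_neg] at h1 h2
    have d1 := diag s; have d2 := diag t
    have e1 : (starRingEnd ℂ) (M s t) + (starRingEnd ℂ) (M t s) - M s t - M t s = 0 := by
      linear_combination h1 - d1 - d2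
    have e2 : -(starRingEnd ℂ) (M s t) + (starRingEnd ℂ) (M t s) - M s t + M t s = 0 := by
      have hI : Complex.I * (-(starRingEnd ℂ) (M s t) + (starRingEnd ℂ) (M t s)
          - M s t + M t s) = 0 := by
        linear_combination h2 - d1 + Complex.I ^ 2 * d2
      rcases mul_eq_zero.mp hI with h' | h'
      · exact absurd h' Complex.I_ne_zero
      · exact h'
    linear_combination e1 / 2 - e2 / 2

lemma hsInner_blocks {k : ℕ} {m : Type*} [Fintype m]
    (P Q : Matrix (Fin k × m) (Fin k × m) ℂ) :
    hsInner P Q = ∑ i : Fin k, ∑ j : Fin k,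
      hsInner (Matrix.of fun a b => P (i, a) (j, b)) (Matrix.of fun a b => Q (i, a) (j, b)) := by
  simp only [hsInner_eq_sum, Matrix.of_apply, Fintype.sum_prod_type]
  exact Finset.sum_congr rfl fun i _ => Finset.sum_comm

lemma kron_conjTranspose {m : Type*} [Fintype m] (a b : Matrix m m ℂ) :
    (a ⊗ₖ b)ᴴ = aᴴ ⊗ₖ bᴴ := by
  ext ⟨i, j⟩ ⟨k, l⟩
  simp [Matrix.conjTranspose_apply, Matrix.kroneckerMap_apply]

lemma hsInner_kron {m : Type*} [Fintype m] (a b c d : Matrix m m ℂ) :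
    hsInner (a ⊗ₖ b) (c ⊗ₖ d) = hsInner a c * hsInner b d := by
  rw [hsInner, hsInner, hsInner, kron_conjTranspose, ← Matrix.mul_kronecker_mul,
    Matrix.trace_kronecker]

lemma amplify_block {p q : Type*} [Fintype p] [Fintype q]
    (Φ : Matrix p p ℂ →ₗ[ℂ] Matrix q q ℂ) (k : ℕ)
    (M : Matrix (Fin k × p) (Fin k × p) ℂ) (i j : Fin k) :
    (Matrix.of fun a b => (amplify Φ k M) (i, a) (j, b))
      = Φ (Matrix.of fun a b => M (i, a) (j, b)) := rfl

def e1 (m : Type*) : Fin 1 × m ≃ m where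
  toFun x := x.2
  invFun a := (0, a)
  left_inv := by rintro ⟨i, a⟩; simp [Subsingleton.elim i 0]
  right_inv a := rfl

end Stmt9Aux

open Stmt9Aux

/-- If δ is completely positive then δ†(1) is invertible, and hence positive definite. -/
theorem stmt_9 (n : ℕ) (hn : 1 ≤ n)
    (α : Fin (n * n) → Matrix (Fin n) (Fin n) ℂ)
    (horth : ∀ i j, hsInner (α i) (α j) = if i = j then 1 else 0)
    (hspan : Submodule.span ℂ (Set.range α) = ⊤)
    (δ : Matrix (Fin n) (Fin n) ℂ →ₗ[ℂ] Matrix (Fin n × Fin n) (Fin n × Fin n) ℂ)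
    (hδ : ∀ i, δ (α i) = α i ⊗ₖ α i)
    (δd : Matrix (Fin n × Fin n) (Fin n × Fin n) ℂ →ₗ[ℂ] Matrix (Fin n) (Fin n) ℂ)
    (hadj : ∀ a b, hsInner (δ a) b = hsInner a (δd b))
    (hCP : IsCompletelyPositive δ) :
    IsUnit (δd 1) ∧ (δd 1).PosDef := by
  classical
  -- the adjoint relation passes to amplifications
  have hampadj : ∀ (k : ℕ) (A : Matrix (Fin k × Fin n) (Fin k × Fin n) ℂ)
      (B : Matrix (Fin k × (Fin n × Fin n)) (Fin k × (Fin n × Fin n)) ℂ),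
      hsInner (amplify δ k A) B = hsInner A (amplify δd k B) := by
    intro k A B
    rw [hsInner_blocks, hsInner_blocks]
    simp only [amplify_block]
    exact Finset.sum_congr rfl fun i _ => Finset.sum_congr rfl fun j _ => hadj _ _
  -- δd is a retraction of δ
  have hcomp : ∀ X, δd (δ X) = X := by
    have hext : (δd ∘ₗ δ) = LinearMap.id := by
      apply LinearMap.ext_on hspan
      rintro x ⟨j, rfl⟩
      show δd (δ (α j)) = α j
      set D := δd (δ (α j)) - α j with hD
      have hzero : ∀ a, a ∈ Submodule.span ℂ (Set.range α) → hsInner a D = 0 := by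
        intro a ha
        induction ha using Submodule.span_induction with
        | mem x hx =>
          obtain ⟨i, rfl⟩ := hx
          rw [hD, hsInner_sub_right, ← hadj, hδ, hδ, hsInner_kron, horth]
          by_cases hij : i = j <;> simp [hij]
        | zero => exact hsInner_zero_left D
        | add x y _ _ hx hy => rw [hsInner_add_left, hx, hy, add_zero]
        | smul c x _ hx => rw [hsInner_smul_left, hx, mul_zero]
      have hDD : hsInner D D = 0 := hzero D (hspan ▸ Submodule.mem_top)
      have := hsInner_self_eq_zero hDD
      rw [hD] at this
      have := sub_eq_zero.mp this
      simpa [hD] using this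
    intro X
    exact congrArg (fun f => f X) (congrArg DFunLike.coe hext)
  -- δ preserves positive semidefiniteness (CP at level 1)
  have hposδ : ∀ X : Matrix (Fin n) (Fin n) ℂ, X.PosSemidef → (δ X).PosSemidef := by
    intro X hX
    have h1 := hCP 1 (X.submatrix (e1 _) (e1 _)) (hX.submatrix _)
    have h2 := h1.submatrix (e1 (Fin n × Fin n)).symm
    have heq : ((amplify δ 1 (X.submatrix (e1 _) (e1 _))).submatrix
        (e1 (Fin n × Fin n)).symm (e1 (Fin n × Fin n)).symm) = δ X := by
      ext s t
      rfl
    rwa [heq] at h2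
  -- quadratic forms of amplified δd on PSD matrices are nonnegative
  have hquadamp : ∀ (k : ℕ) (B : Matrix (Fin k × (Fin n × Fin n)) (Fin k × (Fin n × Fin n)) ℂ),
      B.PosSemidef → ∀ v : Fin k × Fin n → ℂ,
      0 ≤ star v ⬝ᵥ (amplify δd k B) *ᵥ v := by
    intro k B hB v
    rw [quad_eq_hsInner, ← hampadj]
    exact hsInner_nonneg (hCP k _ (psd_vecMulVec v)) hB
  set A := δd 1 with hAdef
  -- quadratic form of A
  have hquadA : ∀ u : Fin n → ℂ,
      star u ⬝ᵥ A *ᵥ u = hsInner (δ (Matrix.vecMulVec u (star u))) 1 := by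
    intro u
    rw [quad_eq_hsInner, ← hadj]
  -- A is positive semidefinite
  have hApsd : A.PosSemidef := by
    have hnn : ∀ u : Fin n → ℂ, 0 ≤ star u ⬝ᵥ A *ᵥ u := by
      intro u
      rw [hquadA]
      exact hsInner_nonneg (hposδ _ (psd_vecMulVec u)) Matrix.PosSemidef.one
    refine Matrix.PosSemidef.of_dotProduct_mulVec_nonneg (isHermitian_of_quad A fun v => ?_) hnn
    have h0 := hnn v
    have him : (star v ⬝ᵥ A *ᵥ v).im = 0 := ((Complex.le_def.mp h0).2).symm
    rw [Complex.conj_eq_iff_im]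
    exact him
  -- the kernel of A is trivial
  have hker : ∀ v : Fin n → ℂ, A *ᵥ v = 0 → v = 0 := by
    intro v hv
    set X := Matrix.vecMulVec v (star v) with hX
    set x := δ X with hx
    set Y : Fin 2 → Matrix (Fin n × Fin n) (Fin n × Fin n) ℂ :=
      fun i => if i = 0 then 1 else x with hY
    set W : Matrix (Fin n × Fin n) (Fin 2 × (Fin n × Fin n)) ℂ :=
      Matrix.of fun a p => Y p.1 a p.2 with hW
    set Mm := Wᴴ * W with hMm
    have hMpsd : Mm.PosSemidef := Matrix.posSemidef_conjTranspose_mul_self W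
    have hblk : ∀ i j : Fin 2,
        (Matrix.of fun a b => Mm (i, a) (j, b)) = (Y i)ᴴ * (Y j) := by
      intro i j
      ext a b
      simp [hMm, hW, Matrix.mul_apply, Matrix.conjTranspose_apply]
    -- the quadratic form computation
    have hquad : ∀ c : ℂ,
        star (fun p : Fin 2 × Fin n => (if p.1 = 0 then c else 1) * v p.2) ⬝ᵥ
          (amplify δd 2 Mm) *ᵥ (fun p : Fin 2 × Fin n => (if p.1 = 0 then c else 1) * v p.2)
        = ∑ i : Fin 2, ∑ j : Fin 2,
            (starRingEnd ℂ) (if i = 0 then c else 1) * (if j = 0 then c else 1) *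
              (star v ⬝ᵥ (δd ((Y i)ᴴ * Y j)) *ᵥ v) := by
      intro c
      rw [quad_eq_hsInner, hsInner_blocks]
      refine Finset.sum_congr rfl fun i _ => Finset.sum_congr rfl fun j _ => ?_
      have hblock : (Matrix.of fun a b =>
          (Matrix.vecMulVec (fun p : Fin 2 × Fin n => (if p.1 = 0 then c else 1) * v p.2)
            (star fun p : Fin 2 × Fin n => (if p.1 = 0 then c else 1) * v p.2)) (i, a) (j, b))
          = ((if i = 0 then c else 1) * (starRingEnd ℂ) (if j = 0 then c else 1)) •
            Matrix.vecMulVec v (star v) := by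
        ext a b
        simp only [Matrix.of_apply, Matrix.vecMulVec_apply, Pi.star_apply, RCLike.star_def,
          _root_.map_mul, Matrix.smul_apply, smul_eq_mul]
        ring
      rw [hblock, hsInner_smul_left, amplify_block, hblk, ← quad_eq_hsInner]
      simp only [_root_.map_mul, Complex.conj_conj]
      try ring
    -- evaluate the four blocks
    have hY0 : (Y 0)ᴴ * Y 0 = 1 := by simp [hY]
    have hY01 : (Y 0)ᴴ * Y 1 = x := by norm_num [hY]
    have hY10 : (Y 1)ᴴ * Y 0 = xᴴ := by norm_num [hY]
    have hY11 : (Y 1)ᴴ * Y 1 = xᴴ * x := by norm_num [hY]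
    have hterm00 : star v ⬝ᵥ (δd ((Y 0)ᴴ * Y 0)) *ᵥ v = 0 := by
      rw [hY0, ← hAdef, hv, dotProduct_zero]
    have hterm01 : star v ⬝ᵥ (δd ((Y 0)ᴴ * Y 1)) *ᵥ v
        = (star v ⬝ᵥ v) * (star v ⬝ᵥ v) := by
      rw [hY01, hx, hcomp, hX]
      rw [quad_eq_hsInner, hsInner_eq_sum]
      simp only [Matrix.vecMulVec_apply, Pi.star_apply, RCLike.star_def, _root_.map_mul,
        Complex.conj_conj, dotProduct, Finset.sum_mul, Finset.mul_sum]
      refine Finset.sum_congr rfl fun a _ => Finset.sum_congr rfl fun b _ => by ring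
    -- the family of inequalities
    have hineq : ∀ c : ℂ, 0 ≤ (starRingEnd ℂ) c * ((star v ⬝ᵥ v) * (star v ⬝ᵥ v))
        + c * (star v ⬝ᵥ (δd ((Y 1)ᴴ * Y 0)) *ᵥ v)
        + star v ⬝ᵥ (δd ((Y 1)ᴴ * Y 1)) *ᵥ v := by
      intro c
      have h0 := hquadamp 2 Mm hMpsd
        (fun p : Fin 2 × Fin n => (if p.1 = 0 then c else 1) * v p.2)
      rw [hquad c] at h0
      rw [Fin.sum_univ_two] at h0
      simp only [Fin.sum_univ_two] at h0
      norm_num at h0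
      rw [hterm00, hterm01] at h0
      convert h0 using 1
      ring
    set β := star v ⬝ᵥ v with hβ
    set b2 := star v ⬝ᵥ (δd ((Y 1)ᴴ * Y 0)) *ᵥ v with hb2
    set g := star v ⬝ᵥ (δd ((Y 1)ᴴ * Y 1)) *ᵥ v with hg
    have hr1 : β * β + b2 = 0 := by
      have := aux_lin (β * β + b2) g (fun t => by
        have h0 := hineq (t : ℂ)
        have : (starRingEnd ℂ) ((t : ℂ)) = (t : ℂ) := Complex.conj_ofReal t
        calc (0 : ℂ) ≤ (starRingEnd ℂ) ((t : ℂ)) * (β * β) + (t : ℂ) * b2 + g := h0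
          _ = (t : ℂ) * (β * β + b2) + g := by rw [this]; ring)
      exact this
    have hr2 : b2 = β * β := by
      have := aux_lin (Complex.I * (b2 - β * β)) g (fun t => by
        have h0 := hineq ((t : ℂ) * Complex.I)
        have hc : (starRingEnd ℂ) ((t : ℂ) * Complex.I) = -((t : ℂ) * Complex.I) := by
          rw [_root_.map_mul, Complex.conj_ofReal, Complex.conj_I]; ring
        calc (0 : ℂ) ≤ (starRingEnd ℂ) ((t : ℂ) * Complex.I) * (β * β)
              + ((t : ℂ) * Complex.I) * b2 + g := h0
          _ = (t : ℂ) * (Complex.I * (b2 - β * β)) + g := by rw [hc]; ring)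
      have hI := this
      rcases mul_eq_zero.mp hI with h' | h'
      · exact absurd h' Complex.I_ne_zero
      · exact sub_eq_zero.mp h'
    have hββ : β * β = 0 := by
      have h2β : (2 : ℂ) * (β * β) = 0 := by linear_combination hr1 - hr2
      rcases mul_eq_zero.mp h2β with h' | h'
      · norm_num at h'
      · exact h'
    have hβ0 : β = 0 := by
      exact mul_self_eq_zero.mp hββ
    exact dotProduct_star_self_eq_zero.mp hβ0
  -- conclude
  have hunit : IsUnit A := by
    rw [← Matrix.mulVec_injective_iff_isUnit]
    intro u w huw
    have : A *ᵥ (u - w) = 0 := by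
      rw [Matrix.mulVec_sub, huw, sub_self]
    have := hker _ this
    exact sub_eq_zero.mp this
  refine ⟨hunit, Matrix.PosDef.of_dotProduct_mulVec_pos hApsd.1 fun z hz => ?_⟩
  refine lt_of_le_of_ne (hApsd.dotProduct_mulVec_nonneg z) fun hq => ?_
  exact hz (hker z ((hApsd.dotProduct_mulVec_zero_iff z).mp hq.symm))
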